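/- For n ≥ 1, there is a bijection between ordered prefix tables on [n] of rank k and pairs (p, S) where p : [n] → {0,…,k} is a function whose image contains {0,…,k−1}, and S = (S₀ ⊊ S₁ ⊊ ⋯ ⊊ S_k = [n]) is a strictly increasing chain of nonempty subsets of [n]. The bijection maps (p, S) to the function f defined by f(u) = S_{p(u)}, and in particular the number of ordered prefix tables of rank k equals k!·S(n+1,k+1) · (k+1)!·S(n,k+1). -/

import Mathlib

set_option maxHeartbeats 1000000

/-- Stirling numbers of the second kind. -/
def stirling2 : ℕ → ℕ → ℕ
  | 0, 0 => 1
  | 0, _ + 1 => 0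
  | _ + 1, 0 => 0
  | n + 1, k + 1 => (k + 1) * stirling2 n (k + 1) + stirling2 n k

/-- An ordered prefix table on `[n]`: all values nonempty, values totally ordered
by inclusion, and there is a starting state. -/
def IsOPT {n : ℕ} (f : Fin n → Finset (Fin n)) : Prop :=
  (∀ u, (f u).Nonempty) ∧ (∀ i j, f i ⊆ f j ∨ f j ⊆ f i) ∧ ∃ i, ∀ j, f i ⊆ f j

/-- The rank of an ordered prefix table: the number of distinct values `≠ [n]`. -/
def rankOPT {n : ℕ} (f : Fin n → Finset (Fin n)) : ℕ :=
  ((Finset.univ.image f).erase Finset.univ).card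

/-! ### Counting surjections -/

/-- The number of surjections `Fin n → Fin m`. -/
noncomputable def surjCount (n m : ℕ) : ℕ :=
  Nat.card {g : Fin n → Fin m // Function.Surjective g}

lemma missOne_card (n t : ℕ) (a : Fin (t + 1)) :
    Nat.card {g : Fin n → Fin (t + 1) //
      (∀ u, g u ≠ a) ∧ ∀ b, b ≠ a → ∃ u, g u = b} = surjCount n t := by
  have hcard : Fintype.card {b : Fin (t + 1) // b ≠ a} = t := by
    simp [Fintype.card_subtype_compl]
  have e : Fin t ≃ {b : Fin (t + 1) // b ≠ a} := Fintype.equivOfCardEq (by simp [hcard])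
  symm
  apply Nat.card_congr
  refine Equiv.ofBijective (fun h => ⟨fun u => (e (h.1 u)).1, fun u => (e (h.1 u)).2,
    fun b hb => ?_⟩) ⟨?_, ?_⟩
  · obtain ⟨u, hu⟩ := h.2 (e.symm ⟨b, hb⟩)
    refine ⟨u, ?_⟩
    show ((e (h.1 u)) : Fin (t+1)) = b
    rw [hu]; simp
  · rintro ⟨h, hh⟩ ⟨h', hh'⟩ heq
    have : ∀ u, (e (h u)).1 = (e (h' u)).1 := fun u => congrFun (congrArg Subtype.val heq) u
    exact Subtype.ext (funext fun u => e.injective (Subtype.ext (this u)))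
  · rintro ⟨g, hg1, hg2⟩
    refine ⟨⟨fun u => e.symm ⟨g u, hg1 u⟩, fun y => ?_⟩, ?_⟩
    · obtain ⟨u, hu⟩ := hg2 (e y).1 (e y).2
      refine ⟨u, ?_⟩
      show e.symm ⟨g u, hg1 u⟩ = y
      have : (⟨g u, hg1 u⟩ : {b : Fin (t+1) // b ≠ a}) = e y := Subtype.ext hu
      rw [this]; simp
    · exact Subtype.ext (funext fun u => by simp)

lemma surj_cons_iff {n t : ℕ} (a : Fin (t + 1)) (g : Fin n → Fin (t + 1)) :
    Function.Surjective (Fin.cons a g : Fin (n+1) → Fin (t+1)) ↔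
      Function.Surjective g ∨ ((∀ u, g u ≠ a) ∧ ∀ b, b ≠ a → ∃ u, g u = b) := by
  have key : ∀ b : Fin (t+1), (∃ i, (Fin.cons a g : Fin (n+1) → Fin (t+1)) i = b) →
      b = a ∨ ∃ u, g u = b := by
    rintro b ⟨i, hi⟩
    rcases Fin.eq_zero_or_eq_succ i with rfl | ⟨j, rfl⟩
    · left; simpa using hi.symm
    · right; exact ⟨j, by simpa using hi⟩
  constructor
  · intro hs
    by_cases ha : ∃ u, g u = a
    · left
      intro b
      rcases key b (hs b) with rfl | h
      · exact ha
      · exact h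
    · right
      push_neg at ha
      refine ⟨ha, fun b hb => ?_⟩
      rcases key b (hs b) with rfl | h
      · exact absurd rfl hb
      · exact h
  · rintro (hs | ⟨_, hs⟩) b
    · obtain ⟨u, hu⟩ := hs b; exact ⟨u.succ, by simpa⟩
    · by_cases hb : b = a
      · exact ⟨0, by simp [hb]⟩
      · obtain ⟨u, hu⟩ := hs b hb; exact ⟨u.succ, by simpa⟩

lemma surjCount_succ_succ (n t : ℕ) :
    surjCount (n + 1) (t + 1) = (t + 1) * (surjCount n (t + 1) + surjCount n t) := by
  have e1 : {g : Fin (n+1) → Fin (t+1) // Function.Surjective g} ≃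
      {x : Fin (t+1) × (Fin n → Fin (t+1)) //
        Function.Surjective x.2 ∨ ((∀ u, x.2 u ≠ x.1) ∧ ∀ b, b ≠ x.1 → ∃ u, x.2 u = b)} := by
    refine Equiv.subtypeEquiv (p := fun g => Function.Surjective g)
      (q := fun x : Fin (t+1) × (Fin n → Fin (t+1)) =>
        Function.Surjective x.2 ∨ ((∀ u, x.2 u ≠ x.1) ∧ ∀ b, b ≠ x.1 → ∃ u, x.2 u = b))
      (Fin.consEquiv (fun _ => Fin (t+1))).symm ?_
    intro g
    have : g = (Fin.cons (g 0) (fun i => g i.succ) : Fin (n+1) → Fin (t+1)) := by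
      funext i
      rcases Fin.eq_zero_or_eq_succ i with rfl | ⟨j, rfl⟩ <;> simp
    conv_lhs => rw [this]
    exact surj_cons_iff _ _
  letI : DecidablePred (fun x : Fin (t+1) × (Fin n → Fin (t+1)) =>
    Function.Surjective x.2) := Classical.decPred _
  have e2 := subtypeOrEquiv
    (p := fun x : Fin (t+1) × (Fin n → Fin (t+1)) => Function.Surjective x.2)
    (q := fun x => (∀ u, x.2 u ≠ x.1) ∧ ∀ b, b ≠ x.1 → ∃ u, x.2 u = b)
    (by
      rintro p hp hq x hx
      obtain ⟨u, hu⟩ := (hp x hx) x.1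
      exact absurd hu ((hq x hx).1 u))
  have e3 : {x : Fin (t+1) × (Fin n → Fin (t+1)) // Function.Surjective x.2} ≃
      Fin (t+1) × {g : Fin n → Fin (t+1) // Function.Surjective g} :=
    ⟨fun x => (x.1.1, ⟨x.1.2, x.2⟩), fun y => ⟨(y.1, y.2.1), y.2.2⟩,
      fun ⟨⟨a, b⟩, h⟩ => rfl, fun ⟨a, b, h⟩ => rfl⟩
  have e4 := Equiv.subtypeProdEquivSigmaSubtype
    (fun (a : Fin (t+1)) (g : Fin n → Fin (t+1)) =>
      (∀ u, g u ≠ a) ∧ ∀ b, b ≠ a → ∃ u, g u = b)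
  calc surjCount (n+1) (t+1)
      = Nat.card ({x : Fin (t+1) × (Fin n → Fin (t+1)) // Function.Surjective x.2} ⊕
          {x : Fin (t+1) × (Fin n → Fin (t+1)) //
            (∀ u, x.2 u ≠ x.1) ∧ ∀ b, b ≠ x.1 → ∃ u, x.2 u = b}) :=
        Nat.card_congr (e1.trans e2)
    _ = (t+1) * surjCount n (t+1) + (t+1) * surjCount n t := by
        rw [Nat.card_sum, Nat.card_congr e3, Nat.card_prod, Nat.card_congr e4]
        congr 1
        · simp [Nat.card_eq_fintype_card, surjCount]
        · rw [Nat.card_eq_fintype_card, Fintype.card_sigma]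
          have : ∀ a : Fin (t+1), Fintype.card
              {g : Fin n → Fin (t+1) // (∀ u, g u ≠ a) ∧ ∀ b, b ≠ a → ∃ u, g u = b}
              = surjCount n t := fun a => by
            rw [← Nat.card_eq_fintype_card, missOne_card]
          simp [this]
    _ = (t + 1) * (surjCount n (t + 1) + surjCount n t) := by ring

lemma surjCount_eq (n m : ℕ) : surjCount n m = Nat.factorial m * stirling2 n m := by
  induction n generalizing m with
  | zero =>
    match m with
    | 0 =>
      have : Nat.card {g : Fin 0 → Fin 0 // Function.Surjective g} = 1 := by
        rw [Nat.card_eq_one_iff_unique]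
        constructor
        · constructor
          rintro ⟨g, _⟩ ⟨g', _⟩
          exact Subtype.ext (funext fun u => u.elim0)
        · exact ⟨⟨fun u => u.elim0, fun b => b.elim0⟩⟩
      simp only [surjCount, this]; simp [stirling2]
    | t + 1 =>
      have : IsEmpty {g : Fin 0 → Fin (t+1) // Function.Surjective g} := by
        constructor
        rintro ⟨g, hg⟩
        obtain ⟨u, -⟩ := hg 0
        exact u.elim0
      simp [surjCount, Nat.card_of_isEmpty, stirling2]
  | succ n ih =>
    match m with
    | 0 =>
      have : IsEmpty {g : Fin (n+1) → Fin 0 // Function.Surjective g} := by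
        constructor
        rintro ⟨g, -⟩
        exact (g 0).elim0
      simp [surjCount, Nat.card_of_isEmpty, stirling2]
    | t + 1 =>
      rw [surjCount_succ_succ, ih, ih]
      show _ = (t+1).factorial * ((t + 1) * stirling2 n (t + 1) + stirling2 n t)
      rw [Nat.factorial_succ]
      ring

/-! ### The two factors -/

lemma lt_k_iff_ne_last {k : ℕ} (i : Fin (k + 1)) : (i : ℕ) < k ↔ i ≠ Fin.last k := by
  constructor
  · intro h hlast; rw [hlast] at h; simp at h
  · intro h
    exact lt_of_le_of_ne (Nat.lt_succ_iff.mp i.isLt) (fun hc => h (Fin.ext hc))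

lemma pCount (n k : ℕ) :
    Nat.card {p : Fin n → Fin (k + 1) // ∀ i : Fin (k + 1), (i : ℕ) < k → ∃ u, p u = i} =
      surjCount n (k + 1) + surjCount n k := by
  letI : DecidablePred (fun p : Fin n → Fin (k+1) => Function.Surjective p) :=
    Classical.decPred _
  have e1 : {p : Fin n → Fin (k + 1) // ∀ i : Fin (k + 1), (i : ℕ) < k → ∃ u, p u = i} ≃
      {p : Fin n → Fin (k + 1) // Function.Surjective p ∨
        ((∀ u, p u ≠ Fin.last k) ∧ ∀ b, b ≠ Fin.last k → ∃ u, p u = b)} := by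
    refine Equiv.subtypeEquivRight fun p => ?_
    constructor
    · intro h
      by_cases hl : ∃ u, p u = Fin.last k
      · left
        intro b
        by_cases hb : b = Fin.last k
        · exact hb ▸ hl
        · exact h b ((lt_k_iff_ne_last b).mpr hb)
      · right
        push_neg at hl
        exact ⟨hl, fun b hb => h b ((lt_k_iff_ne_last b).mpr hb)⟩
    · rintro (h | ⟨-, h⟩) i hi
      · exact h i
      · exact h i ((lt_k_iff_ne_last i).mp hi)
  have e2 := subtypeOrEquiv
    (p := fun p : Fin n → Fin (k+1) => Function.Surjective p)
    (q := fun p => (∀ u, p u ≠ Fin.last k) ∧ ∀ b, b ≠ Fin.last k → ∃ u, p u = b)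
    (by
      rintro r hrp hrq x hx
      obtain ⟨u, hu⟩ := (hrp x hx) (Fin.last k)
      exact absurd hu ((hrq x hx).1 u))
  rw [Nat.card_congr (e1.trans e2), Nat.card_sum, missOne_card]
  rfl

lemma chainCount (n k : ℕ) :
    Nat.card {S : Fin (k + 1) → Finset (Fin n) //
      StrictMono S ∧ S (Fin.last k) = Finset.univ ∧ (S 0).Nonempty} =
      surjCount n (k + 1) := by
  symm
  apply Nat.card_congr
  refine Equiv.ofBijective
    (fun g => ⟨fun i => Finset.univ.filter (fun v => g.1 v ≤ i), ?_, ?_, ?_⟩) ⟨?_, ?_⟩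
  · intro i j hij
    show Finset.univ.filter (fun v => g.1 v ≤ i) ⊂ Finset.univ.filter (fun v => g.1 v ≤ j)
    rw [Finset.ssubset_iff_of_subset]
    · obtain ⟨v, hv⟩ := g.2 j
      exact ⟨v, by simp [hv], by simp [hv, hij.not_ge]⟩
    · intro v hv
      simp only [Finset.mem_filter] at hv ⊢
      exact ⟨Finset.mem_univ v, hv.2.trans hij.le⟩
  · ext v; simp [Fin.le_last]
  · obtain ⟨v, hv⟩ := g.2 0
    exact ⟨v, by simp [hv]⟩
  · rintro ⟨g, hg⟩ ⟨g', hg'⟩ heq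
    simp only [Subtype.mk.injEq] at heq ⊢
    funext v
    have h1 := congrFun heq (g v)
    have h2 := congrFun heq (g' v)
    have e1 : v ∈ Finset.univ.filter (fun w => g' w ≤ g v) := h1 ▸ (by simp)
    have e2 : v ∈ Finset.univ.filter (fun w => g w ≤ g' v) := h2.symm ▸ (by simp)
    simp only [Finset.mem_filter] at e1 e2
    exact le_antisymm e2.2 e1.2
  · rintro ⟨S, hmono, hlast, h0⟩
    have hvmem : ∀ v : Fin n, (Finset.univ.filter (fun i => v ∈ S i)).Nonempty :=
      fun v => ⟨Fin.last k, by simp [hlast]⟩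
    set g : Fin n → Fin (k + 1) := fun v => (Finset.univ.filter (fun i => v ∈ S i)).min' (hvmem v)
      with hgdef
    have hg_mem : ∀ v, v ∈ S (g v) := fun v => by
      have := Finset.min'_mem _ (hvmem v)
      simpa using this
    have hg_le : ∀ v i, v ∈ S i → g v ≤ i := fun v i hv =>
      Finset.min'_le _ _ (by simp [hv])
    have hSg : ∀ v i, v ∈ S i ↔ g v ≤ i := by
      intro v i
      constructor
      · exact hg_le v i
      · intro h
        exact hmono.monotone h (hg_mem v)
    have hsurj : Function.Surjective g := by
      intro i
      rcases Fin.eq_zero_or_eq_succ i with rfl | ⟨j, rfl⟩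
      · obtain ⟨v, hv⟩ := h0
        exact ⟨v, le_antisymm (hg_le v 0 hv) (Fin.zero_le _)⟩
      · have hss : S j.castSucc ⊂ S j.succ := hmono (Fin.castSucc_lt_succ : j.castSucc < j.succ)
        obtain ⟨v, hv1, hv2⟩ := Finset.exists_of_ssubset hss
        refine ⟨v, le_antisymm (hg_le v _ hv1) ?_⟩
        rw [← Fin.castSucc_lt_iff_succ_le]
        by_contra hc
        push_neg at hc
        exact hv2 (hmono.monotone hc (hg_mem v))
    refine ⟨⟨g, hsurj⟩, ?_⟩
    simp only [Subtype.mk.injEq]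
    funext i
    ext v
    simp [← hSg]

/-! ### The bijection -/

section aux
variable {n k : ℕ}

lemma aux_isOPT (hn : 1 ≤ n) (p : Fin n → Fin (k + 1)) (S : Fin (k + 1) → Finset (Fin n))
    (hp : ∀ i : Fin (k + 1), (i : ℕ) < k → ∃ u, p u = i)
    (hS : StrictMono S) (h0 : (S 0).Nonempty) :
    IsOPT (fun u => S (p u)) := by
  refine ⟨fun u => h0.mono (hS.monotone (Fin.zero_le _)), fun i j => ?_, ?_⟩
  · rcases le_total (p i) (p j) with h | h
    · exact Or.inl (hS.monotone h)
    · exact Or.inr (hS.monotone h)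
  · have h0' : ∃ u, p u = 0 := by
      rcases Nat.eq_zero_or_pos k with rfl | hk
      · exact ⟨⟨0, hn⟩, Fin.fin_one_eq_zero _⟩
      · exact hp 0 (by simpa using hk)
    obtain ⟨u, hu⟩ := h0'
    exact ⟨u, fun j => by simpa [hu] using hS.monotone (Fin.zero_le (p j))⟩

lemma aux_rank (p : Fin n → Fin (k + 1)) (S : Fin (k + 1) → Finset (Fin n))
    (hp : ∀ i : Fin (k + 1), (i : ℕ) < k → ∃ u, p u = i)
    (hS : StrictMono S) (hlast : S (Fin.last k) = Finset.univ) :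
    rankOPT (fun u => S (p u)) = k := by
  have hset : (Finset.univ.image (fun u => S (p u))).erase Finset.univ =
      (Finset.univ.erase (Fin.last k)).image S := by
    ext T
    simp only [Finset.mem_erase, Finset.mem_image, Finset.mem_univ, true_and, and_true]
    constructor
    · rintro ⟨hTne, u, hu⟩
      refine ⟨p u, ?_, hu⟩
      intro hpl
      rw [hpl] at hu
      exact hTne (hu.symm.trans hlast)
    · rintro ⟨i, hine, hi⟩
      have hlt : S i ⊂ S (Fin.last k) := hS (lt_of_le_of_ne (Fin.le_last i) hine)
      refine ⟨?_, ?_⟩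
      · rintro rfl
        rw [hlast] at hlt
        exact (Finset.ssubset_iff_of_subset (hi ▸ Finset.subset_univ _)).mp
          (hi ▸ hlt) |>.elim (fun v hv => hv.2 (Finset.mem_univ v))
      · obtain ⟨u, hu⟩ := hp i ((lt_k_iff_ne_last i).mpr hine)
        exact ⟨u, by rw [hu, hi]⟩
  rw [rankOPT, hset, Finset.card_image_of_injective _ hS.injective,
    Finset.card_erase_of_mem (Finset.mem_univ _)]
  simp

lemma aux_range (p : Fin n → Fin (k + 1)) (S : Fin (k + 1) → Finset (Fin n))
    (hp : ∀ i : Fin (k + 1), (i : ℕ) < k → ∃ u, p u = i)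
    (hlast : S (Fin.last k) = Finset.univ) :
    Set.range S = insert Finset.univ (Set.range (fun u => S (p u))) := by
  ext T
  simp only [Set.mem_range, Set.mem_insert_iff]
  constructor
  · rintro ⟨i, rfl⟩
    by_cases hi : i = Fin.last k
    · left; rw [hi, hlast]
    · right
      obtain ⟨u, hu⟩ := hp i ((lt_k_iff_ne_last i).mpr hi)
      exact ⟨u, by rw [hu]⟩
  · rintro (rfl | ⟨u, rfl⟩)
    · exact ⟨Fin.last k, hlast⟩
    · exact ⟨p u, rfl⟩

lemma aux_surj (hn : 1 ≤ n) (f : Fin n → Finset (Fin n)) (hf : IsOPT f)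
    (hrank : rankOPT f = k) :
    ∃ p : Fin n → Fin (k + 1), ∃ S : Fin (k + 1) → Finset (Fin n),
      (∀ i : Fin (k + 1), (i : ℕ) < k → ∃ u, p u = i) ∧ StrictMono S ∧
      S (Fin.last k) = Finset.univ ∧ (S 0).Nonempty ∧ (fun u => S (p u)) = f := by
  obtain ⟨hne, hchain, -⟩ := hf
  haveI : Nonempty (Fin n) := ⟨⟨0, hn⟩⟩
  set A : Finset (Finset (Fin n)) := insert Finset.univ (Finset.univ.image f) with hA
  have hAchain : ∀ T ∈ A, ∀ T' ∈ A, T ⊆ T' ∨ T' ⊆ T := by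
    intro T hT T' hT'
    rw [hA, Finset.mem_insert] at hT hT'
    rcases hT with rfl | hT
    · exact Or.inr (Finset.subset_univ _)
    rcases hT' with rfl | hT'
    · exact Or.inl (Finset.subset_univ _)
    obtain ⟨u, -, rfl⟩ := Finset.mem_image.mp hT
    obtain ⟨v, -, rfl⟩ := Finset.mem_image.mp hT'
    exact hchain u v
  have hAinj : Set.InjOn Finset.card (A : Set (Finset (Fin n))) := by
    intro T hT T' hT' hcard
    rcases hAchain T hT T' hT' with h | h
    · exact Finset.eq_of_subset_of_card_le h (le_of_eq hcard.symm)
    · exact (Finset.eq_of_subset_of_card_le h (le_of_eq hcard)).symm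
  have hAcard : A.card = k + 1 := by
    have h1 : (A.erase Finset.univ).card + 1 = A.card :=
      Finset.card_erase_add_one (Finset.mem_insert_self _ _)
    have h2 : A.erase Finset.univ = (Finset.univ.image f).erase Finset.univ := by
      rw [hA, Finset.erase_insert_eq_erase]
    rw [← h1, h2]
    rw [rankOPT] at hrank
    rw [hrank]
  have hBcard : (A.image Finset.card).card = k + 1 := by
    rw [Finset.card_image_of_injOn hAinj, hAcard]
  set oB := (A.image Finset.card).orderIsoOfFin hBcard with hoB
  have hex : ∀ i : Fin (k + 1), ∃! T, T ∈ A ∧ T.card = ((oB i : ℕ)) := by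
    intro i
    obtain ⟨T, hT, hTc⟩ := Finset.mem_image.mp (oB i).2
    refine ⟨T, ⟨hT, hTc⟩, ?_⟩
    rintro T' ⟨hT', hTc'⟩
    exact hAinj hT' hT (hTc'.trans hTc.symm)
  set S : Fin (k + 1) → Finset (Fin n) := fun i =>
    A.choose (fun T => T.card = ((oB i : ℕ))) (hex i) with hSdef
  have hSmem : ∀ i, S i ∈ A := fun i => Finset.choose_mem (fun T => T.card = ((oB i : ℕ))) A (hex i)
  have hScard : ∀ i, (S i).card = (oB i : ℕ) :=
    fun i => Finset.choose_property (fun T => T.card = ((oB i : ℕ))) A (hex i)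
  have hSmono : StrictMono S := by
    intro i j hij
    have hc : (S i).card < (S j).card := by
      rw [hScard, hScard]
      exact oB.strictMono hij
    rcases hAchain _ (hSmem i) _ (hSmem j) with h | h
    · exact lt_of_le_of_ne h (fun hc' => absurd (hc' ▸ rfl) hc.ne)
    · exact absurd (Finset.card_le_card h) (not_le.mpr hc)
  have hSrange : ∀ T ∈ A, ∃ i, S i = T := by
    intro T hT
    refine ⟨oB.symm ⟨T.card, Finset.mem_image_of_mem _ hT⟩, ?_⟩
    apply hAinj (hSmem _) hT
    rw [hScard]
    exact congrArg Subtype.val (oB.apply_symm_apply _)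
  have hSlast : S (Fin.last k) = Finset.univ := by
    obtain ⟨i, hi⟩ := hSrange Finset.univ (Finset.mem_insert_self _ _)
    by_cases h : i = Fin.last k
    · rw [← h, hi]
    · have := hSmono (lt_of_le_of_ne (Fin.le_last i) h)
      rw [hi] at this
      exact absurd (Finset.subset_univ (S (Fin.last k))) this.not_subset.elim
  have hfu_mem : ∀ u, f u ∈ A := fun u => by
    rw [hA]; exact Finset.mem_insert_of_mem (Finset.mem_image_of_mem f (Finset.mem_univ u))
  set p : Fin n → Fin (k + 1) := fun u =>
    oB.symm ⟨(f u).card, Finset.mem_image_of_mem _ (hfu_mem u)⟩ with hpdef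
  have hfp : ∀ u, S (p u) = f u := by
    intro u
    apply hAinj (hSmem _) (hfu_mem u)
    rw [hScard, hpdef]
    exact congrArg Subtype.val (oB.apply_symm_apply _)
  have hp : ∀ i : Fin (k + 1), (i : ℕ) < k → ∃ u, p u = i := by
    intro i hi
    have hine := (lt_k_iff_ne_last i).mp hi
    have hSi_ne : S i ≠ Finset.univ := by
      have := hSmono (lt_of_le_of_ne (Fin.le_last i) hine)
      rw [hSlast] at this
      intro hc
      rw [hc] at this
      exact absurd this (lt_irrefl _)
    have : S i ∈ Finset.univ.image f := by
      have := hSmem i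
      rw [hA, Finset.mem_insert] at this
      exact this.resolve_left hSi_ne
    obtain ⟨u, -, hu⟩ := Finset.mem_image.mp this
    refine ⟨u, ?_⟩
    apply oB.injective
    rw [hpdef]
    rw [oB.apply_symm_apply]
    exact Subtype.ext (by simp only; rw [hu, hScard])
  have h0 : (S 0).Nonempty := by
    have := hSmem 0
    rw [hA, Finset.mem_insert] at this
    rcases this with h | h
    · rw [h]; exact Finset.univ_nonempty
    · obtain ⟨u, -, hu⟩ := Finset.mem_image.mp h
      rw [← hu]; exact hne u
  exact ⟨p, S, hp, hSmono, hSlast, h0, funext hfp⟩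

end aux

theorem opt_bijection_and_count {n k : ℕ} (hn : 1 ≤ n) :
    (∃ e : {pS : (Fin n → Fin (k + 1)) × (Fin (k + 1) → Finset (Fin n)) //
          (∀ i : Fin (k + 1), (i : ℕ) < k → ∃ u, pS.1 u = i) ∧
          StrictMono pS.2 ∧ pS.2 (Fin.last k) = Finset.univ ∧ (pS.2 0).Nonempty} ≃
        {f : Fin n → Finset (Fin n) // IsOPT f ∧ rankOPT f = k},
      ∀ x, (e x).val = fun u => x.val.2 (x.val.1 u)) ∧
    Nat.card {f : Fin n → Finset (Fin n) // IsOPT f ∧ rankOPT f = k} =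
      (Nat.factorial k * stirling2 (n + 1) (k + 1)) *
        (Nat.factorial (k + 1) * stirling2 n (k + 1)) := by
  set F : {pS : (Fin n → Fin (k + 1)) × (Fin (k + 1) → Finset (Fin n)) //
      (∀ i : Fin (k + 1), (i : ℕ) < k → ∃ u, pS.1 u = i) ∧
      StrictMono pS.2 ∧ pS.2 (Fin.last k) = Finset.univ ∧ (pS.2 0).Nonempty} →
      {f : Fin n → Finset (Fin n) // IsOPT f ∧ rankOPT f = k} :=
    fun x => ⟨fun u => x.val.2 (x.val.1 u),
      aux_isOPT hn x.val.1 x.val.2 x.2.1 x.2.2.1 x.2.2.2.2,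
      aux_rank x.val.1 x.val.2 x.2.1 x.2.2.1 x.2.2.2.1⟩ with hF
  have hbij : Function.Bijective F := by
    constructor
    · rintro ⟨⟨p, S⟩, hp, hS, hlast, h0⟩ ⟨⟨p', S'⟩, hp', hS', hlast', h0'⟩ heq
      have hfun : (fun u => S (p u)) = fun u => S' (p' u) :=
        congrArg Subtype.val heq
      have hrange : Set.range S = Set.range S' := by
        rw [aux_range p S hp hlast, aux_range p' S' hp' hlast', hfun]
      have hSS : S = S' := by
        haveI : WellFoundedLT (Fin (k+1)) := inferInstance
        exact (StrictMono.range_inj (f := S) (g := S') hS hS').mp hrange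
      have hpp : p = p' := by
        funext u
        apply hS.injective
        calc S (p u) = S' (p' u) := congrFun hfun u
          _ = S (p' u) := by rw [hSS]
      simp only [Subtype.mk.injEq, Prod.mk.injEq]
      exact ⟨hpp, hSS⟩
    · rintro ⟨f, hopt, hrank⟩
      obtain ⟨p, S, hp, hS, hlast, h0, heq⟩ := aux_surj hn f hopt hrank
      exact ⟨⟨(p, S), hp, hS, hlast, h0⟩, Subtype.ext heq⟩
  constructor
  · exact ⟨Equiv.ofBijective F hbij, fun x => rfl⟩
  · rw [← Nat.card_congr (Equiv.ofBijective F hbij)]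
    have e5 := Equiv.subtypeProdEquivProd
      (p := fun p : Fin n → Fin (k + 1) => ∀ i : Fin (k + 1), (i : ℕ) < k → ∃ u, p u = i)
      (q := fun S : Fin (k + 1) → Finset (Fin n) =>
        StrictMono S ∧ S (Fin.last k) = Finset.univ ∧ (S 0).Nonempty)
    rw [Nat.card_congr e5, Nat.card_prod, pCount, chainCount, surjCount_eq, surjCount_eq]
    have hst : stirling2 (n + 1) (k + 1) = (k + 1) * stirling2 n (k + 1) + stirling2 n k := rfl
    rw [hst, Nat.factorial_succ]
    ring
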